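/- Let Γ_∞ be the subgroup of SL₂(ℤ) consisting of matrices whose lower-left entry is 0 (i.e. ±(1 m; 0 1) for m ∈ ℤ), and let Stab(i) = {±I, ±(0 −1; 1 0)} be the stabilizer of i in SL₂(ℤ). The map sending σ = (a b; c d) ∈ SL₂(ℤ) to the pair ((ac+bd) mod (c²+d²), c²+d²) is constant on double cosets Γ_∞ σ Stab(i) and induces a bijection from the double coset space Γ_∞ \ SL₂(ℤ) / Stab(i) onto the set {(ν,n) ∈ ℤ² : n ≥ 1, 0 ≤ ν < n, n ∣ ν²+1} of all (root, modulus) pairs of the congruence X²+1 ≡ 0 (mod n). -/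

import Mathlib

/-- `SL₂(ℤ)`. -/
abbrev SL2Z := Matrix.SpecialLinearGroup (Fin 2) ℤ

/-- `Γ_∞`: the subgroup of matrices in `SL₂(ℤ)` whose lower-left entry is `0`. -/
def GammaInf : Set SL2Z := {γ | γ.1 1 0 = 0}

/-- The matrix `(0 −1; 1 0)` as an element of `SL₂(ℤ)`. -/
def wMat : SL2Z := ⟨!![0, -1; 1, 0], by norm_num [Matrix.det_fin_two_of]⟩

/-- `Stab(i) = {±I, ±(0 −1; 1 0)}`, the stabilizer of `i` in `SL₂(ℤ)`. -/
def StabI : Set SL2Z := {1, -1, wMat, -wMat}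

/-- The map `σ = (a b; c d) ↦ ((ac + bd) mod (c² + d²), c² + d²)`. -/
def rootPair (σ : SL2Z) : ℤ × ℤ :=
  ((σ.1 0 0 * σ.1 1 0 + σ.1 0 1 * σ.1 1 1) % (σ.1 1 0 ^ 2 + σ.1 1 1 ^ 2),
    σ.1 1 0 ^ 2 + σ.1 1 1 ^ 2)

lemma mydet (σ : SL2Z) : σ.1 0 0 * σ.1 1 1 - σ.1 0 1 * σ.1 1 0 = 1 := by
  have := σ.2; rwa [Matrix.det_fin_two] at this

lemma sq1 {x : ℤ} (h : x ≠ 0) : 1 ≤ x ^ 2 := by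
  have := Int.one_le_abs h; nlinarith [sq_abs x]

lemma mynpos (σ : SL2Z) : 1 ≤ σ.1 1 0 ^ 2 + σ.1 1 1 ^ 2 := by
  have h := mydet σ
  rcases eq_or_ne (σ.1 1 0) 0 with h0 | h0
  · rcases eq_or_ne (σ.1 1 1) 0 with h1 | h1
    · rw [h0, h1] at h; simp at h
    · nlinarith [sq_nonneg (σ.1 1 0), sq1 h1]
  · nlinarith [sq_nonneg (σ.1 1 1), sq1 h0]

lemma part2 (σ : SL2Z) : 1 ≤ (rootPair σ).2 ∧ 0 ≤ (rootPair σ).1 ∧ (rootPair σ).1 < (rootPair σ).2 ∧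
      (rootPair σ).2 ∣ (rootPair σ).1 ^ 2 + 1 := by
  set a := σ.1 0 0; set b := σ.1 0 1; set c := σ.1 1 0; set d := σ.1 1 1
  have hd : a * d - b * c = 1 := mydet σ
  have hn : (1:ℤ) ≤ c ^ 2 + d ^ 2 := mynpos σ
  have hn0 : (0:ℤ) < c ^ 2 + d ^ 2 := by linarith
  refine ⟨hn, Int.emod_nonneg _ (by linarith), Int.emod_lt_of_pos _ hn0, ?_⟩
  -- n ∣ (ν' % n)^2 + 1
  have key : (a * c + b * d) ^ 2 + 1 = (a ^ 2 + b ^ 2) * (c ^ 2 + d ^ 2) := by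
    linear_combination (-(a * d - b * c + 1)) * hd
  have h1 : (a * c + b * d) % (c ^ 2 + d ^ 2) ≡ a * c + b * d [ZMOD c ^ 2 + d ^ 2] :=
    Int.emod_emod_of_dvd _ dvd_rfl
  have h2 := (h1.pow 2).add_right 1
  have h3 : (c ^ 2 + d ^ 2) ∣ (a * c + b * d) ^ 2 + 1 := ⟨a ^ 2 + b ^ 2, by linarith [key]⟩
  have h4 := dvd_sub h3 h2.dvd
  show (c ^ 2 + d ^ 2) ∣ ((a * c + b * d) % (c ^ 2 + d ^ 2)) ^ 2 + 1
  rw [show ((a * c + b * d) % (c ^ 2 + d ^ 2)) ^ 2 + 1 = (a * c + b * d) ^ 2 + 1 - ((a * c + b * d) ^ 2 + 1 - (((a * c + b * d) % (c ^ 2 + d ^ 2)) ^ 2 + 1)) by ring]; exact h4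

lemma surjAux : ∀ N : ℕ, ∀ n ν : ℤ, n ≤ (N:ℤ) → 1 ≤ n → 0 ≤ ν → ν < n → n ∣ ν ^ 2 + 1 →
    ∃ a b c d : ℤ, a * d - b * c = 1 ∧ c ^ 2 + d ^ 2 = n ∧ a * c + b * d = ν := by
  intro N
  induction N with
  | zero => intro n ν h h1 _ _ _; omega
  | succ N ih =>
    intro n ν hN h1 h0 hlt hdvd
    rcases eq_or_lt_of_le h1 with h1' | h2
    · -- n = 1
      refine ⟨1, 0, 0, 1, by ring, by omega, by omega⟩
    · -- n ≥ 2
      obtain ⟨m, hm⟩ := hdvd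
      have hν1 : 1 ≤ ν := by
        rcases eq_or_lt_of_le h0 with h | h
        · exfalso; rw [← h] at hm; simp at hm
          have hdd : n ∣ (1:ℤ) := ⟨m, hm⟩
          have := Int.le_of_dvd one_pos hdd; omega
        · omega
      have hm1 : 1 ≤ m := by nlinarith
      have hmn : m < n := by nlinarith
      set ν₁ := (-ν) % m with hν₁
      have hm0 : (0:ℤ) < m := hm1
      have hb1 : 0 ≤ ν₁ := Int.emod_nonneg _ (by omega)
      have hb2 : ν₁ < m := Int.emod_lt_of_pos _ hm0
      have hmod : ν₁ ≡ -ν [ZMOD m] := Int.emod_emod_of_dvd _ dvd_rfl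
      have hdvd2 : m ∣ ν₁ ^ 2 + 1 := by
        have h2' := (hmod.pow 2).add_right 1
        have h3 : m ∣ (-ν) ^ 2 + 1 := ⟨n, by linarith [hm]; ⟩
        have := dvd_sub h3 h2'.dvd
        rw [show ν₁ ^ 2 + 1 = ((-ν) ^ 2 + 1) - ((-ν) ^ 2 + 1 - (ν₁ ^ 2 + 1)) by ring]; exact this
      obtain ⟨a, b, c, d, hdet, hsum, hval⟩ := ih m ν₁ (by omega) hm1 hb1 hb2 hdvd2
      obtain ⟨t, ht⟩ : m ∣ ν₁ + ν := by
        have := hmod.dvd  -- m ∣ -ν - ν₁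
        have h' : ν₁ + ν = -(-ν - ν₁) := by ring
        rw [h']; exact dvd_neg.mpr this
      refine ⟨-c, -d, a - t * c, b - t * d, by linear_combination hdet, ?_, ?_⟩
      · -- (a - t c)^2 + (b - t d)^2 = n
        have key : ν₁ ^ 2 + 1 = (a ^ 2 + b ^ 2) * m := by
          rw [← hval, ← hsum]; linear_combination (-(a * d - b * c + 1)) * hdet
        have hcan : m * ((a - t * c) ^ 2 + (b - t * d) ^ 2 - n) = 0 := by
          linear_combination (-1) * key + (-2 * t * m) * hval + (m * t ^ 2) * hsum + hm
            + (ν₁ - ν - m * t) * ht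
        have := mul_eq_zero.mp hcan
        rcases this with h | h
        · omega
        · linarith
      · linear_combination (-1) * hval + t * hsum + (-1) * ht

lemma rp_eq (σ τ : SL2Z)
    (h2 : τ.1 1 0 ^ 2 + τ.1 1 1 ^ 2 = σ.1 1 0 ^ 2 + σ.1 1 1 ^ 2)
    (h1 : (σ.1 1 0 ^ 2 + σ.1 1 1 ^ 2) ∣
      (τ.1 0 0 * τ.1 1 0 + τ.1 0 1 * τ.1 1 1) - (σ.1 0 0 * σ.1 1 0 + σ.1 0 1 * σ.1 1 1)) :
    rootPair τ = rootPair σ := by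
  unfold rootPair
  rw [h2]
  exact Prod.ext (Int.ModEq.symm (Int.modEq_iff_dvd.mpr h1)) rfl

lemma part1 (σ τ : SL2Z) (h : ∃ γ ∈ GammaInf, ∃ s ∈ StabI, τ = γ * σ * s) :
    rootPair τ = rootPair σ := by
  obtain ⟨γ, hγ, s, hs, rfl⟩ := h
  have hγ0 : γ.1 1 0 = 0 := hγ
  have hdet : γ.1 0 0 * γ.1 1 1 = 1 := by have := mydet γ; rw [hγ0] at this; linarith
  obtain ⟨h00, h11⟩ | ⟨h00, h11⟩ := Int.mul_eq_one_iff_eq_one_or_neg_one.mp hdet <;>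
  · simp only [StabI, Set.mem_insert_iff, Set.mem_singleton_iff] at hs
    rcases hs with rfl | rfl | rfl | rfl <;>
    · apply rp_eq <;>
        simp only [Matrix.SpecialLinearGroup.coe_mul, Matrix.SpecialLinearGroup.coe_neg,
          Matrix.SpecialLinearGroup.coe_one] <;>
        simp only [Matrix.SpecialLinearGroup.coe_mul, Matrix.SpecialLinearGroup.coe_neg,
          Matrix.mul_apply, Fin.sum_univ_two, wMat, Matrix.SpecialLinearGroup.coe_one,
          Matrix.cons_val', Matrix.cons_val_zero, Matrix.cons_val_one, Matrix.head_cons,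
          Matrix.head_fin_const, Matrix.one_apply, Matrix.neg_apply, Matrix.cons_val_fin_one,
          Matrix.empty_val', Matrix.of_apply, mul_one, mul_zero, mul_neg, neg_neg,
          hγ0, h00, h11, Fin.zero_eq_one_iff, Fin.one_eq_zero_iff, one_ne_zero, OfNat.ofNat_ne_one, ite_true, ite_false] <;>
      first
        | ring1
        | (refine ⟨γ.1 0 1, ?_⟩; ring1)
        | (refine ⟨-(γ.1 0 1), ?_⟩; ring1)

lemma ww : wMat * wMat = -1 := by
  ext i j
  rw [Matrix.SpecialLinearGroup.coe_mul, Matrix.SpecialLinearGroup.coe_neg, Matrix.SpecialLinearGroup.coe_one]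
  fin_cases i <;> fin_cases j <;>
    simp [wMat, Matrix.SpecialLinearGroup.coe_mul, Matrix.mul_apply, Fin.sum_univ_two,
      Matrix.SpecialLinearGroup.coe_neg, Matrix.SpecialLinearGroup.coe_one]

set_option maxHeartbeats 1000000 in
lemma part4 (σ τ : SL2Z) (h : rootPair σ = rootPair τ) :
    ∃ γ ∈ GammaInf, ∃ s ∈ StabI, τ = γ * σ * s := by
  obtain ⟨hmod, hn⟩ := Prod.mk.injEq _ _ _ _ ▸ h
  set a := σ.1 0 0 with ha; set b := σ.1 0 1 with hb
  set c := σ.1 1 0 with hc; set d := σ.1 1 1 with hd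
  set a' := τ.1 0 0 with ha'; set b' := τ.1 0 1 with hb'
  set c' := τ.1 1 0 with hc'; set d' := τ.1 1 1 with hd'
  have hdσ : a * d - b * c = 1 := mydet σ
  have hdτ : a' * d' - b' * c' = 1 := mydet τ
  have hN1 : (1:ℤ) ≤ c ^ 2 + d ^ 2 := mynpos σ
  have hN0 : (c ^ 2 + d ^ 2 : ℤ) ≠ 0 := by linarith
  rw [← hn] at hmod
  have hkdvd : (c ^ 2 + d ^ 2) ∣ (a' * c' + b' * d') - (a * c + b * d) :=
    Int.ModEq.dvd (hmod : Int.ModEq _ _ _)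
  obtain ⟨k, hk⟩ := hkdvd
  have hx : c * c' + d * d' = (c ^ 2 + d ^ 2) * (a' * d - b * c' - k * c' * d) := by
    linear_combination (-(c * c')) * hdσ + (-(d * d')) * hdτ + (-(c' * d)) * hk +
      (-(a' * d)) * hn
  have hy : c * d' - c' * d = (c ^ 2 + d ^ 2) * (b' * d - b * d' - k * d * d') := by
    linear_combination (-(c * d')) * hdσ + (c' * d) * hdτ + (-(d * d')) * hk +
      (-(b' * d)) * hn
  set x := a' * d - b * c' - k * c' * d with hxdef
  set y := b' * d - b * d' - k * d * d' with hydef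
  have hsq : (c ^ 2 + d ^ 2) ^ 2 * (x ^ 2 + y ^ 2) = (c ^ 2 + d ^ 2) ^ 2 * 1 := by
    linear_combination (-(c * c' + d * d' + (c ^ 2 + d ^ 2) * x)) * hx +
      (-(c * d' - c' * d + (c ^ 2 + d ^ 2) * y)) * hy + (-(c ^ 2 + d ^ 2)) * hn
  have hone : x ^ 2 + y ^ 2 = 1 := by
    have h2 : ((c ^ 2 + d ^ 2) ^ 2 : ℤ) ≠ 0 := pow_ne_zero _ hN0
    exact mul_left_cancel₀ h2 hsq
  have hNc' : (c ^ 2 + d ^ 2) * c' = (c ^ 2 + d ^ 2) * (x * c - y * d) := by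
    linear_combination c * hx + (-d) * hy
  have hNd' : (c ^ 2 + d ^ 2) * d' = (c ^ 2 + d ^ 2) * (x * d + y * c) := by
    linear_combination d * hx + c * hy
  have hc'eq : c' = x * c - y * d := mul_left_cancel₀ hN0 hNc'
  have hd'eq : d' = x * d + y * c := mul_left_cancel₀ hN0 hNd'
  clear_value x y
  clear hx hy hsq hNc' hNd' hk hmod hdσ hdτ hxdef hydef
  have hcases : (x = 1 ∧ y = 0) ∨ (x = -1 ∧ y = 0) ∨ (x = 0 ∧ y = 1) ∨ (x = 0 ∧ y = -1) := by
    have h1 : x ^ 2 ≤ 1 := by nlinarith [sq_nonneg y]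
    have h2 : y ^ 2 ≤ 1 := by nlinarith [sq_nonneg x]
    have h3 : -1 ≤ x ∧ x ≤ 1 := ⟨by nlinarith, by nlinarith⟩
    have h4 : -1 ≤ y ∧ y ≤ 1 := ⟨by nlinarith, by nlinarith⟩
    have h5 : x = -1 ∨ x = 0 ∨ x = 1 := by omega
    have h6 : y = -1 ∨ y = 0 ∨ y = 1 := by omega
    rcases h5 with h|h|h <;> rcases h6 with h'|h'|h' <;> subst h <;> subst h' <;>
      norm_num at hone <;> norm_num
  have hww1 : wMat * -wMat = 1 := by rw [mul_neg, ww]; simp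
  have hww2 : -wMat * wMat = 1 := by rw [neg_mul, ww]; simp
  rcases hcases with ⟨hx0, hy0⟩ | ⟨hx0, hy0⟩ | ⟨hx0, hy0⟩ | ⟨hx0, hy0⟩ <;>
      subst hx0 <;> subst hy0 <;> norm_num at hc'eq hd'eq
  · -- (1,0) : c' = c, d' = d, s = 1
    refine ⟨τ * σ⁻¹, ?_, 1, by simp [StabI], by rw [mul_one, inv_mul_cancel_right]⟩
    show (τ * σ⁻¹).1 1 0 = 0
    rw [Matrix.SpecialLinearGroup.coe_mul, Matrix.SpecialLinearGroup.coe_inv, Matrix.adjugate_fin_two]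
    simp [Matrix.SpecialLinearGroup.coe_mul, Matrix.mul_apply, Fin.sum_univ_two]
    linear_combination d * hc'eq + (-c) * hd'eq
  · -- (-1,0) : c' = -c, d' = -d, s = -1
    refine ⟨τ * -1 * σ⁻¹, ?_, -1, by simp [StabI], ?_⟩
    · show (τ * -1 * σ⁻¹).1 1 0 = 0
      rw [Matrix.SpecialLinearGroup.coe_mul, Matrix.SpecialLinearGroup.coe_inv, Matrix.adjugate_fin_two]
      simp [Matrix.SpecialLinearGroup.coe_mul, Matrix.mul_apply, Fin.sum_univ_two,
        Matrix.SpecialLinearGroup.coe_neg, Matrix.SpecialLinearGroup.coe_one]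
      linear_combination (-d) * hc'eq + c * hd'eq
    · rw [inv_mul_cancel_right]
      simp
  · -- (0,1) : c' = -d, d' = c, s = -wMat
    refine ⟨τ * wMat * σ⁻¹, ?_, -wMat, by simp [StabI], ?_⟩
    · show (τ * wMat * σ⁻¹).1 1 0 = 0
      rw [Matrix.SpecialLinearGroup.coe_mul, Matrix.SpecialLinearGroup.coe_mul,
        Matrix.SpecialLinearGroup.coe_inv, Matrix.adjugate_fin_two]
      simp [Matrix.SpecialLinearGroup.coe_mul, Matrix.mul_apply, Fin.sum_univ_two, wMat]
      linear_combination c * hc'eq + d * hd'eq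
    · rw [inv_mul_cancel_right, mul_assoc, hww1, mul_one]
  · -- (0,-1) : c' = d, d' = -c, s = wMat
    refine ⟨τ * -wMat * σ⁻¹, ?_, wMat, by simp [StabI], ?_⟩
    · show (τ * -wMat * σ⁻¹).1 1 0 = 0
      rw [Matrix.SpecialLinearGroup.coe_mul, Matrix.SpecialLinearGroup.coe_mul,
        Matrix.SpecialLinearGroup.coe_neg, Matrix.SpecialLinearGroup.coe_inv, Matrix.adjugate_fin_two]
      simp [Matrix.SpecialLinearGroup.coe_mul, Matrix.mul_apply, Fin.sum_univ_two, wMat,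
        Matrix.SpecialLinearGroup.coe_neg]
      linear_combination (-c) * hc'eq + (-d) * hd'eq
    · rw [inv_mul_cancel_right, mul_assoc, hww2, mul_one]

/-- The map `rootPair` is constant on double cosets `Γ_∞ σ Stab(i)` and induces a bijection
from `Γ_∞ \ SL₂(ℤ) / Stab(i)` onto the set of (root, modulus) pairs of `X² + 1 ≡ 0 (mod n)`. -/
theorem stmt2 :
    (∀ σ τ : SL2Z, (∃ γ ∈ GammaInf, ∃ s ∈ StabI, τ = γ * σ * s) → rootPair τ = rootPair σ) ∧
    (∀ σ : SL2Z, 1 ≤ (rootPair σ).2 ∧ 0 ≤ (rootPair σ).1 ∧ (rootPair σ).1 < (rootPair σ).2 ∧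
      (rootPair σ).2 ∣ (rootPair σ).1 ^ 2 + 1) ∧
    (∀ q : ℤ × ℤ, 1 ≤ q.2 → 0 ≤ q.1 → q.1 < q.2 → q.2 ∣ q.1 ^ 2 + 1 →
      ∃ σ : SL2Z, rootPair σ = q) ∧
    (∀ σ τ : SL2Z, rootPair σ = rootPair τ → ∃ γ ∈ GammaInf, ∃ s ∈ StabI, τ = γ * σ * s) := by
  refine ⟨part1, part2, ?_, part4⟩
  intro q h1 h2 h3 h4
  obtain ⟨a, b, c, d, hdet, hsum, hval⟩ :=
    surjAux q.2.toNat q.2 q.1 (by omega) h1 h2 h3 h4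
  refine ⟨⟨!![a, b; c, d], by rw [Matrix.det_fin_two_of]; linarith⟩, ?_⟩
  have hq : q = (q.1, q.2) := rfl
  rw [hq]
  unfold rootPair
  simp only [Matrix.cons_val', Matrix.cons_val_zero, Matrix.cons_val_one, Matrix.head_cons,
    Matrix.head_fin_const, Matrix.empty_val', Matrix.cons_val_fin_one, Matrix.of_apply]
  rw [hval, hsum]
  exact Prod.ext (Int.emod_eq_of_lt h2 h3) rfl
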